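/- Let n ≥ 2 and k ≥ 1. For a regular k-jet γ of a curve in ℂⁿ, let S_γ = {Ψ ∈ J : Ψ∘γ ≡ 0 (mod t^{k+1})}, where J is the vector space of polynomials in n variables over ℂ with zero constant term and total degree ≤ k, and Ψ∘γ denotes substitution of γ into Ψ followed by reduction modulo t^{k+1}. Then for any two regular k-jets γ and δ of curves in ℂⁿ, one has S_γ = S_δ if and only if there exists a reparametrisation k-jet φ with δ ≡ γ∘φ (mod t^{k+1}). In particular, the map γ ↦ S_γ induces an injective map from the set of orbits of the reparametrisation group acting on regular k-jets of curves to the set of linear subspaces of J. -/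

import Mathlib

open Polynomial

/-- For a `k`-jet `γ` of a curve in `ℂⁿ`, the solution space
`S_γ = {Ψ ∈ J : Ψ ∘ γ ≡ 0 (mod t^{k+1})}`, where `J` is the space of polynomials in `n`
variables with zero constant term and total degree at most `k`. -/
def solutionSpace (n k : ℕ) (γ : Fin n → Polynomial ℂ) : Set (MvPolynomial (Fin n) ℂ) :=
  {Ψ : MvPolynomial (Fin n) ℂ |
    Ψ.totalDegree ≤ k ∧ MvPolynomial.coeff 0 Ψ = 0 ∧
    ∀ j ≤ k, (MvPolynomial.aeval γ Ψ).coeff j = 0}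

section Aux

/-- transitivity of congruences expressed with subtraction -/
private lemma dvd_sub_trans {M a b c : Polynomial ℂ} (h1 : M ∣ a - b) (h2 : M ∣ b - c) :
    M ∣ a - c := by
  have := dvd_add h1 h2
  rwa [sub_add_sub_cancel] at this

private lemma dvd_sub_symm {M a b : Polynomial ℂ} (h : M ∣ a - b) : M ∣ b - a := by
  have := dvd_neg.mpr h
  rwa [neg_sub] at this

/-- membership in the solution space, expressed via divisibility -/
private lemma mem_solutionSpace_iff {n k : ℕ} (γ : Fin n → Polynomial ℂ)
    (Ψ : MvPolynomial (Fin n) ℂ) :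
    Ψ ∈ solutionSpace n k γ ↔ Ψ.totalDegree ≤ k ∧ MvPolynomial.coeff 0 Ψ = 0 ∧
      (X : Polynomial ℂ) ^ (k + 1) ∣ MvPolynomial.aeval γ Ψ := by
  constructor
  · rintro ⟨h1, h2, h3⟩
    exact ⟨h1, h2, X_pow_dvd_iff.mpr fun d hd => h3 d (by omega)⟩
  · rintro ⟨h1, h2, h3⟩
    exact ⟨h1, h2, fun j hj => X_pow_dvd_iff.mp h3 j (by omega)⟩

/-- right-composition preserves congruences, if the inner jet has no constant term -/
private lemma dvd_comp_sub_comp {N : ℕ} {f p q : Polynomial ℂ} (hf : f.coeff 0 = 0)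
    (h : (X : Polynomial ℂ) ^ N ∣ p - q) :
    (X : Polynomial ℂ) ^ N ∣ p.comp f - q.comp f := by
  obtain ⟨r, hr⟩ := h
  have h2 : p.comp f - q.comp f = f ^ N * r.comp f := by
    rw [← sub_comp, hr, mul_comp, X_pow_comp]
  rw [h2]
  exact Dvd.dvd.mul_right (pow_dvd_pow_of_dvd (X_dvd_iff.mpr hf) N) _

/-- substitution into a multivariate polynomial preserves congruences -/
private lemma aeval_congr_dvd {n N : ℕ} {γ' δ' : Fin n → Polynomial ℂ}
    (h : ∀ i, (X : Polynomial ℂ) ^ N ∣ γ' i - δ' i) (Ψ : MvPolynomial (Fin n) ℂ) :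
    (X : Polynomial ℂ) ^ N ∣ MvPolynomial.aeval γ' Ψ - MvPolynomial.aeval δ' Ψ := by
  set I : Ideal (Polynomial ℂ) := Ideal.span {(X : Polynomial ℂ) ^ N} with hI
  rw [← Ideal.mem_span_singleton, ← hI, ← Ideal.Quotient.eq]
  have e1 := MvPolynomial.comp_aeval_apply (f := γ') (Ideal.Quotient.mkₐ ℂ I) Ψ
  have e2 := MvPolynomial.comp_aeval_apply (f := δ') (Ideal.Quotient.mkₐ ℂ I) Ψ
  have hmk : ∀ x : Polynomial ℂ, Ideal.Quotient.mkₐ ℂ I x = Ideal.Quotient.mk I x :=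
    fun x => rfl
  have hfun : (fun i => Ideal.Quotient.mkₐ ℂ I (γ' i))
      = fun i => Ideal.Quotient.mkₐ ℂ I (δ' i) := by
    funext i
    have h2 := h i
    rw [← Ideal.mem_span_singleton, ← hI] at h2
    show Ideal.Quotient.mk I (γ' i) = Ideal.Quotient.mk I (δ' i)
    exact Ideal.Quotient.eq.mpr h2
  rw [← hmk, ← hmk, e1, e2, hfun]

/-- if `f ∘ φ` is divisible by `X^m` then so is `f`, for `φ` a regular jet -/
private lemma dvd_of_dvd_comp {φ : Polynomial ℂ} (h0 : φ.coeff 0 = 0) (h1 : φ.coeff 1 ≠ 0) :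
    ∀ (m : ℕ) (f : Polynomial ℂ),
      (X : Polynomial ℂ) ^ m ∣ f.comp φ → (X : Polynomial ℂ) ^ m ∣ f := by
  obtain ⟨u, hu⟩ := X_dvd_iff.mpr h0
  have hu0 : u.coeff 0 = φ.coeff 1 := by rw [hu]; exact (coeff_X_mul u 0).symm
  intro m
  induction m with
  | zero => intro f _; simpa using (one_dvd f)
  | succ m ih =>
    intro f hf
    obtain ⟨g, hg⟩ := ih f ((pow_dvd_pow _ (Nat.le_succ m)).trans hf)
    have hcomp : f.comp φ = X ^ m * (u ^ m * g.comp φ) := by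
      rw [hg, mul_comp, X_pow_comp, hu, mul_pow, mul_assoc]
    have hXdvd : (X : Polynomial ℂ) ∣ u ^ m * g.comp φ := by
      have h2 : (X : Polynomial ℂ) ^ m * X ∣ X ^ m * (u ^ m * g.comp φ) := by
        rw [← pow_succ, ← hcomp]; exact hf
      exact (mul_dvd_mul_iff_left (pow_ne_zero m (X_ne_zero (R := ℂ)))).mp h2
    have hg0 : g.coeff 0 = 0 := by
      have h3 := X_dvd_iff.mp hXdvd
      rw [coeff_zero_eq_eval_zero, eval_mul, eval_pow, eval_comp] at h3
      have hφ0 : φ.eval 0 = 0 := by rw [← coeff_zero_eq_eval_zero]; exact h0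
      rw [hφ0] at h3
      have hune : u.eval 0 ≠ 0 := by
        rw [← coeff_zero_eq_eval_zero, hu0]; exact h1
      rcases mul_eq_zero.mp h3 with h' | h'
      · exact absurd h' (pow_ne_zero m hune)
      · rw [coeff_zero_eq_eval_zero]; exact h'
    obtain ⟨g', hg'⟩ := X_dvd_iff.mpr hg0
    exact ⟨g', by rw [hg, hg', pow_succ, mul_assoc]⟩

/-- sum commutes with composition -/
private lemma finset_sum_comp {ι : Type*} (s : Finset ι) (f : ι → Polynomial ℂ)
    (g : Polynomial ℂ) : (∑ x ∈ s, f x).comp g = ∑ x ∈ s, (f x).comp g := by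
  simp only [comp_eq_aeval]
  exact map_sum (Polynomial.aeval g) f s

/-- substituting a variable into a univariate polynomial: total degree bound -/
private lemma totalDegree_aeval_X_le {n : ℕ} (i : Fin n) (p : Polynomial ℂ) :
    (Polynomial.aeval (MvPolynomial.X i : MvPolynomial (Fin n) ℂ) p).totalDegree
      ≤ p.natDegree := by
  rw [Polynomial.aeval_eq_sum_range]
  refine MvPolynomial.totalDegree_finsetSum_le fun m hm => ?_
  refine le_trans (MvPolynomial.totalDegree_smul_le _ _) ?_
  rw [MvPolynomial.totalDegree_X_pow]
  exact Nat.lt_succ_iff.mp (Finset.mem_range.mp hm)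

/-- substituting a variable into a univariate polynomial: constant coefficient -/
private lemma coeff_zero_aeval_X {n : ℕ} (i : Fin n) (p : Polynomial ℂ) :
    MvPolynomial.coeff 0 (Polynomial.aeval (MvPolynomial.X i : MvPolynomial (Fin n) ℂ) p)
      = p.coeff 0 := by
  have h : MvPolynomial.coeff 0
        (Polynomial.aeval (MvPolynomial.X i : MvPolynomial (Fin n) ℂ) p)
      = MvPolynomial.aeval (fun _ : Fin n => (0 : ℂ))
        (Polynomial.aeval (MvPolynomial.X i : MvPolynomial (Fin n) ℂ) p) := by
    rw [MvPolynomial.aeval_zero']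
    simp [MvPolynomial.constantCoeff_eq]
  rw [h, ← Polynomial.aeval_algHom_apply
      (MvPolynomial.aeval (fun _ : Fin n => (0 : ℂ)) : MvPolynomial (Fin n) ℂ →ₐ[ℂ] ℂ)
      (MvPolynomial.X i) p, MvPolynomial.aeval_X]
  show (Polynomial.aeval (0 : ℂ)) p = p.coeff 0
  rw [show ((Polynomial.aeval (0 : ℂ)) p) = p.eval 0 from by rw [coe_aeval_eq_eval]]
  rw [← coeff_zero_eq_eval_zero]

/-- full substitution of jets factoring through substitution of a single variable -/
private lemma aeval_aeval_X {n : ℕ} (γ : Fin n → Polynomial ℂ) (i : Fin n)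
    (p : Polynomial ℂ) :
    MvPolynomial.aeval γ
        (Polynomial.aeval (MvPolynomial.X i : MvPolynomial (Fin n) ℂ) p)
      = p.comp (γ i) := by
  have h := Polynomial.aeval_algHom_apply
      (MvPolynomial.aeval γ : MvPolynomial (Fin n) ℂ →ₐ[ℂ] Polynomial ℂ)
      (MvPolynomial.X i) p
  rw [MvPolynomial.aeval_X] at h
  rw [← h, comp_eq_aeval]

/-- constant coefficient of a substituted multivariate polynomial -/
private lemma coeff_zero_aeval {n : ℕ} (γ : Fin n → Polynomial ℂ)
    (hγ0 : ∀ i, (γ i).coeff 0 = 0) (Ψ : MvPolynomial (Fin n) ℂ) :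
    (MvPolynomial.aeval γ Ψ).coeff 0 = MvPolynomial.coeff 0 Ψ := by
  have h1 : (MvPolynomial.aeval γ Ψ).coeff 0
      = (Polynomial.aeval (0 : ℂ)) (MvPolynomial.aeval γ Ψ) := by
    rw [show ((Polynomial.aeval (0 : ℂ)) (MvPolynomial.aeval γ Ψ))
      = (MvPolynomial.aeval γ Ψ).eval 0 from by rw [coe_aeval_eq_eval]]
    rw [← coeff_zero_eq_eval_zero]
  rw [h1, MvPolynomial.comp_aeval_apply]
  have h2 : (fun i => (Polynomial.aeval (0 : ℂ)) (γ i)) = fun _ : Fin n => (0 : ℂ) := by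
    funext i
    rw [show ((Polynomial.aeval (0 : ℂ)) (γ i)) = (γ i).eval 0 from by rw [coe_aeval_eq_eval]]
    rw [← coeff_zero_eq_eval_zero]
    exact hγ0 i
  rw [h2, MvPolynomial.aeval_zero']
  simp [MvPolynomial.constantCoeff_eq]

/-- composition with the substituted multivariate polynomial -/
private lemma aeval_comp_right {n : ℕ} (γ : Fin n → Polynomial ℂ) (φ : Polynomial ℂ)
    (Ψ : MvPolynomial (Fin n) ℂ) :
    (MvPolynomial.aeval γ Ψ).comp φ
      = MvPolynomial.aeval (fun i => (γ i).comp φ) Ψ := by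
  rw [comp_eq_aeval, MvPolynomial.comp_aeval_apply]
  rfl

/-- triangular construction: polynomials `p m` with `p m (g) ≡ X^m mod X^(k+1)` -/
private lemma exists_triangular (k : ℕ) (g : Polynomial ℂ) (h0 : g.coeff 0 = 0)
    (h1 : g.coeff 1 ≠ 0) :
    ∃ p : ℕ → Polynomial ℂ, ∀ m, 1 ≤ m → m ≤ k →
      (p m).natDegree ≤ k ∧ (p m).coeff 0 = 0 ∧
      (X : Polynomial ℂ) ^ (k + 1) ∣ (p m).comp g - X ^ m := by
  obtain ⟨u, hu⟩ := X_dvd_iff.mpr h0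
  have hu0 : u.coeff 0 = g.coeff 1 := by rw [hu]; exact (coeff_X_mul u 0).symm
  set a : ℂ := g.coeff 1 with ha
  have hgpow_lt : ∀ m d : ℕ, d < m → (g ^ m).coeff d = 0 := by
    intro m d hd
    have hdvd : (X : Polynomial ℂ) ^ m ∣ g ^ m := pow_dvd_pow_of_dvd (X_dvd_iff.mpr h0) m
    exact X_pow_dvd_iff.mp hdvd d hd
  have hgpow_eq : ∀ m : ℕ, (g ^ m).coeff m = a ^ m := by
    intro m
    rw [hu, mul_pow]
    have h2 := coeff_X_pow_mul (u ^ m) m 0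
    rw [zero_add] at h2
    rw [h2, coeff_zero_eq_eval_zero, eval_pow, ← coeff_zero_eq_eval_zero, hu0]
  have key : ∀ d, d ≤ k → ∃ p : ℕ → Polynomial ℂ, ∀ m, k + 1 - d ≤ m → m ≤ k →
      (p m).natDegree ≤ k ∧ (p m).coeff 0 = 0 ∧
      (X : Polynomial ℂ) ^ (k + 1) ∣ (p m).comp g - X ^ m := by
    intro d
    induction d with
    | zero =>
      intro _
      exact ⟨fun _ => 0, fun m hm1 hm2 => absurd (le_trans hm1 hm2) (by omega)⟩
    | succ d ih =>
      intro hd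
      obtain ⟨p, hp⟩ := ih (by omega)
      set j : ℕ := k - d with hj
      have hj1 : 1 ≤ j := by omega
      have hjk : j ≤ k := by omega
      set f : Polynomial ℂ := C (a⁻¹ ^ j) * g ^ j - X ^ j with hf
      set pj : Polynomial ℂ :=
        C (a⁻¹ ^ j) * X ^ j - ∑ m ∈ Finset.Icc (j + 1) k, C (f.coeff m) * p m with hpj
      refine ⟨Function.update p j pj, fun m hm1 hm2 => ?_⟩
      rcases eq_or_ne m j with rfl | hne
      · rw [Function.update_self]
        refine ⟨?_, ?_, ?_⟩
        · refine le_trans (natDegree_sub_le _ _) (max_le ?_ ?_)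
          · exact le_trans (natDegree_C_mul_le _ _) (by rw [natDegree_X_pow]; exact hjk)
          · refine natDegree_sum_le_of_forall_le _ _ fun m' hm' => ?_
            have hmic := Finset.mem_Icc.mp hm'
            exact le_trans (natDegree_C_mul_le _ _) (hp m' (by omega) hmic.2).1
        · rw [hpj, coeff_sub, coeff_C_mul, coeff_X_pow, finset_sum_coeff]
          rw [Finset.sum_eq_zero (fun m' hm' => by
            have hmic := Finset.mem_Icc.mp hm'
            rw [coeff_C_mul, (hp m' (by omega) hmic.2).2.1, mul_zero])]
          have hne0 : ¬ ((0 : ℕ) = j) := by omega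
          simp [hne0]
        · have hsum_comp : (∑ m' ∈ Finset.Icc (j + 1) k, C (f.coeff m') * p m').comp g
              = ∑ m' ∈ Finset.Icc (j + 1) k, C (f.coeff m') * ((p m').comp g) := by
            rw [finset_sum_comp]
            exact Finset.sum_congr rfl fun m' _ => by rw [mul_comp, C_comp]
          have hcomp : pj.comp g - X ^ j
              = (f - ∑ m' ∈ Finset.Icc (j + 1) k, C (f.coeff m') * X ^ m')
                - ∑ m' ∈ Finset.Icc (j + 1) k, C (f.coeff m') * ((p m').comp g - X ^ m') := by
            rw [hpj, sub_comp, mul_comp, C_comp, X_pow_comp, hsum_comp, hf]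
            simp only [mul_sub, Finset.sum_sub_distrib]
            ring
          rw [hcomp]
          refine dvd_sub ?_ (Finset.dvd_sum fun m' hm' => by
            have hmic := Finset.mem_Icc.mp hm'
            exact Dvd.dvd.mul_left (hp m' (by omega) hmic.2).2.2 _)
          rw [X_pow_dvd_iff]
          intro d' hd'
          rw [coeff_sub, finset_sum_coeff]
          rw [Finset.sum_congr rfl (fun m' _ => by
            rw [coeff_C_mul, coeff_X_pow, mul_ite, mul_one, mul_zero])]
          rw [Finset.sum_ite_eq]
          by_cases hmem : d' ∈ Finset.Icc (j + 1) k
          · rw [if_pos hmem]; exact sub_self _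
          · rw [if_neg hmem]
            rw [Finset.mem_Icc] at hmem
            have hd'le : d' ≤ j := by omega
            have hfz : f.coeff d' = 0 := by
              rw [hf, coeff_sub, coeff_C_mul, coeff_X_pow]
              rcases lt_or_eq_of_le hd'le with hlt | heq
              · rw [hgpow_lt j d' hlt, mul_zero, if_neg (by omega), sub_zero]
              · rw [heq, hgpow_eq, if_pos rfl, inv_pow,
                  inv_mul_cancel₀ (pow_ne_zero j h1), sub_self]
            rw [hfz, sub_zero]
      · rw [Function.update_of_ne hne]
        exact hp m (by omega) hm2
  obtain ⟨p, hp⟩ := key k le_rfl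
  exact ⟨p, fun m hm1 hm2 => hp m (by omega) hm2⟩

end Aux

/-- For `n ≥ 2`, `k ≥ 1` and regular `k`-jets `γ, δ` of curves in `ℂⁿ`,
the solution spaces `S_γ` and `S_δ` coincide if and only if `δ ≡ γ ∘ φ (mod t^{k+1})` for
some reparametrisation `k`-jet `φ`. In particular, `γ ↦ S_γ` induces an injective map on the
orbits of the reparametrisation group acting on regular `k`-jets of curves. -/
theorem solutionSpace_eq_iff_reparam
    (n k : ℕ) (hn : 2 ≤ n) (hk : 1 ≤ k)
    (γ δ : Fin n → Polynomial ℂ)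
    (hγdeg : ∀ i, (γ i).natDegree ≤ k) (hγ0 : ∀ i, (γ i).coeff 0 = 0)
    (hγreg : ∃ i, (γ i).coeff 1 ≠ 0)
    (hδdeg : ∀ i, (δ i).natDegree ≤ k) (hδ0 : ∀ i, (δ i).coeff 0 = 0)
    (hδreg : ∃ i, (δ i).coeff 1 ≠ 0) :
    solutionSpace n k γ = solutionSpace n k δ ↔
      ∃ φ : Polynomial ℂ, φ.natDegree ≤ k ∧ φ.coeff 0 = 0 ∧ φ.coeff 1 ≠ 0 ∧
        ∀ i, ∀ j ≤ k, (δ i).coeff j = ((γ i).comp φ).coeff j := by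
  constructor
  · -- hard direction
    intro hS
    obtain ⟨i, hi⟩ := hγreg
    obtain ⟨p, hp⟩ := exists_triangular k (γ i) (hγ0 i) hi
    set M : Polynomial ℂ := X ^ (k + 1) with hMdef
    have hMcoeff : ∀ f : Polynomial ℂ, M ∣ f → ∀ d, d < k + 1 → f.coeff d = 0 := by
      intro f hf d hd
      have h2 : (X : Polynomial ℂ) ^ (k + 1) ∣ f := hMdef ▸ hf
      exact X_pow_dvd_iff.mp h2 d hd
    set Φ : ℕ → MvPolynomial (Fin n) ℂ :=
      fun j => Polynomial.aeval (MvPolynomial.X i) (p j) with hΦdef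
    set u : ℕ → Polynomial ℂ := fun j => (p j).comp (δ i) with hudef
    have hΦdeg : ∀ j, 1 ≤ j → j ≤ k → (Φ j).totalDegree ≤ k := fun j h1 h2 =>
      le_trans (totalDegree_aeval_X_le i (p j)) (hp j h1 h2).1
    have hΦ0 : ∀ j, 1 ≤ j → j ≤ k → MvPolynomial.coeff 0 (Φ j) = 0 := fun j h1 h2 => by
      show MvPolynomial.coeff 0 (Polynomial.aeval (MvPolynomial.X i) (p j)) = 0
      exact (coeff_zero_aeval_X i (p j)).trans (hp j h1 h2).2.1
    have hΦγ : ∀ j, 1 ≤ j → j ≤ k →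
        M ∣ MvPolynomial.aeval γ (Φ j) - X ^ j := fun j h1 h2 => by
      show M ∣ MvPolynomial.aeval γ (Polynomial.aeval (MvPolynomial.X i) (p j)) - X ^ j
      rw [aeval_aeval_X]
      exact (hp j h1 h2).2.2
    have hΦδ : ∀ j, MvPolynomial.aeval δ (Φ j) = u j := fun j => by
      show MvPolynomial.aeval δ (Polynomial.aeval (MvPolynomial.X i) (p j))
        = (p j).comp (δ i)
      rw [aeval_aeval_X]
    -- Claim 1
    have K1 : ∀ Ψ : MvPolynomial (Fin n) ℂ, Ψ.totalDegree ≤ k → MvPolynomial.coeff 0 Ψ = 0 →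
        M ∣ MvPolynomial.aeval δ Ψ
          - ∑ j ∈ Finset.Icc 1 k, C ((MvPolynomial.aeval γ Ψ).coeff j) * u j := by
      intro Ψ hdeg h0
      set c : ℕ → ℂ := fun j => (MvPolynomial.aeval γ Ψ).coeff j with hc
      set Ψ' : MvPolynomial (Fin n) ℂ :=
        Ψ - ∑ j ∈ Finset.Icc 1 k, MvPolynomial.C (c j) * Φ j with hΨ'
      have hbase : M ∣ MvPolynomial.aeval γ Ψ - ∑ j ∈ Finset.Icc 1 k, C (c j) * X ^ j := by
        rw [hMdef, X_pow_dvd_iff]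
        intro d hd
        rw [coeff_sub, finset_sum_coeff]
        rw [Finset.sum_congr rfl (fun j _ => by
          rw [coeff_C_mul, coeff_X_pow, mul_ite, mul_one, mul_zero])]
        rw [Finset.sum_ite_eq]
        by_cases hmem : d ∈ Finset.Icc 1 k
        · rw [if_pos hmem]; exact sub_self _
        · rw [if_neg hmem]
          have hd0 : d = 0 := by rw [Finset.mem_Icc] at hmem; omega
          rw [hd0, coeff_zero_aeval γ hγ0 Ψ, h0, sub_zero]
      have haevalΨ' : MvPolynomial.aeval γ Ψ'
          = (MvPolynomial.aeval γ Ψ - ∑ j ∈ Finset.Icc 1 k, C (c j) * X ^ j)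
            - ∑ j ∈ Finset.Icc 1 k, C (c j) * (MvPolynomial.aeval γ (Φ j) - X ^ j) := by
        rw [hΨ', map_sub, map_sum]
        simp only [map_mul, MvPolynomial.aeval_C, Polynomial.algebraMap_eq]
        simp only [mul_sub, Finset.sum_sub_distrib]
        ring
      have hΨ'memγ : Ψ' ∈ solutionSpace n k γ := by
        rw [mem_solutionSpace_iff]
        refine ⟨?_, ?_, ?_⟩
        · show (Ψ - ∑ j ∈ Finset.Icc 1 k, MvPolynomial.C (c j) * Φ j).totalDegree ≤ k
          refine le_trans (MvPolynomial.totalDegree_sub _ _) (max_le hdeg ?_)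
          refine MvPolynomial.totalDegree_finsetSum_le fun j hj => ?_
          have hjm := Finset.mem_Icc.mp hj
          refine le_trans (MvPolynomial.totalDegree_mul _ _) ?_
          rw [MvPolynomial.totalDegree_C, zero_add]
          exact hΦdeg j hjm.1 hjm.2
        · show MvPolynomial.coeff 0
            (Ψ - ∑ j ∈ Finset.Icc 1 k, MvPolynomial.C (c j) * Φ j) = 0
          rw [MvPolynomial.coeff_sub, h0, MvPolynomial.coeff_sum]
          rw [Finset.sum_eq_zero fun j hj => by
            have hjm := Finset.mem_Icc.mp hj
            rw [MvPolynomial.coeff_C_mul, hΦ0 j hjm.1 hjm.2, mul_zero]]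
          norm_num
        · show M ∣ MvPolynomial.aeval γ Ψ'
          rw [haevalΨ']
          exact dvd_sub hbase (Finset.dvd_sum fun j hj => by
            have hjm := Finset.mem_Icc.mp hj
            exact Dvd.dvd.mul_left (hΦγ j hjm.1 hjm.2) _)
      have hΨ'memδ : Ψ' ∈ solutionSpace n k δ := by rw [← hS]; exact hΨ'memγ
      have hdvdδ := ((mem_solutionSpace_iff δ Ψ').mp hΨ'memδ).2.2
      have haevalδΨ' : MvPolynomial.aeval δ Ψ'
          = MvPolynomial.aeval δ Ψ - ∑ j ∈ Finset.Icc 1 k, C (c j) * u j := by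
        rw [hΨ', map_sub, map_sum]
        congr 1
        refine Finset.sum_congr rfl fun j hj => ?_
        rw [map_mul, MvPolynomial.aeval_C, hΦδ j, Polynomial.algebraMap_eq]
      rw [haevalδΨ'] at hdvdδ
      exact hdvdδ
    -- modByMonic facts
    have hMmonic : M.Monic := by rw [hMdef]; exact monic_X_pow _
    have hMne1 : M ≠ 1 := by
      intro h
      have h2 := congrArg natDegree h
      rw [hMdef, natDegree_X_pow, natDegree_one] at h2
      omega
    have hmodcong : ∀ f : Polynomial ℂ, M ∣ f - f %ₘ M := fun f => by
      rw [modByMonic_eq_sub_mul_div f M, sub_sub_cancel]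
      exact Dvd.dvd.mul_right dvd_rfl _
    have hmoddeg : ∀ f : Polynomial ℂ, (f %ₘ M).natDegree ≤ k := fun f => by
      have h2 := natDegree_modByMonic_lt f hMmonic hMne1
      have h3 : M.natDegree = k + 1 := by rw [hMdef, natDegree_X_pow]
      omega
    have hp1c : M ∣ (p 1).comp (γ i) - X := by
      have h2 := (hp 1 le_rfl hk).2.2
      rwa [pow_one] at h2
    have hu1_0 : (u 1).coeff 0 = 0 := by
      show ((p 1).comp (δ i)).coeff 0 = 0
      rw [coeff_zero_eq_eval_zero, eval_comp]
      rw [show (δ i).eval 0 = 0 from by rw [← coeff_zero_eq_eval_zero]; exact hδ0 i]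
      rw [← coeff_zero_eq_eval_zero]
      exact (hp 1 le_rfl hk).2.1
    -- Claim 2
    have K2 : ∀ j, 1 ≤ j → j ≤ k → M ∣ u 1 ^ j - u j := by
      intro j h1 hj
      set q : Polynomial ℂ := (p 1 ^ j) %ₘ M with hq
      have hqcong : M ∣ p 1 ^ j - q := hmodcong _
      have congγ : M ∣ q.comp (γ i) - X ^ j := by
        refine dvd_sub_trans (dvd_comp_sub_comp (hγ0 i) (dvd_sub_symm hqcong)) ?_
        rw [pow_comp]
        exact dvd_trans hp1c (sub_dvd_pow_sub_pow _ _ j)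
      have congδ : M ∣ q.comp (δ i) - u 1 ^ j := by
        refine dvd_sub_trans (dvd_comp_sub_comp (hδ0 i) (dvd_sub_symm hqcong)) ?_
        rw [pow_comp]
        have he : (p 1).comp (δ i) = u 1 := rfl
        rw [he, sub_self]
        exact dvd_zero M
      have hΨqdeg : (Polynomial.aeval (MvPolynomial.X i) q
          : MvPolynomial (Fin n) ℂ).totalDegree ≤ k :=
        le_trans (totalDegree_aeval_X_le i q) (hmoddeg _)
      have hΨq0 : MvPolynomial.coeff 0
          (Polynomial.aeval (MvPolynomial.X i) q : MvPolynomial (Fin n) ℂ) = 0 := by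
        rw [coeff_zero_aeval_X]
        have h00 : (p 1 ^ j - q).coeff 0 = 0 := hMcoeff _ hqcong 0 (Nat.succ_pos k)
        rw [coeff_sub, sub_eq_zero] at h00
        rw [← h00, coeff_zero_eq_eval_zero, eval_pow, ← coeff_zero_eq_eval_zero,
          (hp 1 le_rfl hk).2.1]
        exact zero_pow (by omega)
      have hK1q := K1 _ hΨqdeg hΨq0
      rw [aeval_aeval_X δ i q, aeval_aeval_X γ i q] at hK1q
      have hcoe : ∀ m, m ≤ k → (q.comp (γ i)).coeff m = (X ^ j : Polynomial ℂ).coeff m := by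
        intro m hm
        have h3 := hMcoeff _ congγ m (by omega)
        rw [coeff_sub, sub_eq_zero] at h3
        exact h3
      have hsum : ∑ m ∈ Finset.Icc 1 k, C ((q.comp (γ i)).coeff m) * u m = u j := by
        rw [Finset.sum_congr rfl (fun m hm => by
          have hmic := Finset.mem_Icc.mp hm
          rw [hcoe m hmic.2, coeff_X_pow, apply_ite C, C_1, C_0, ite_mul, one_mul, zero_mul])]
        rw [Finset.sum_ite_eq']
        rw [if_pos (Finset.mem_Icc.mpr ⟨h1, hj⟩)]
      rw [hsum] at hK1q
      exact dvd_sub_trans (dvd_sub_symm congδ) hK1q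
    -- regularity of the constructed jet
    have K3 : (u 1).coeff 1 ≠ 0 := by
      intro hzero
      have hX2 : (X : Polynomial ℂ) ^ 2 ∣ u 1 := by
        rw [X_pow_dvd_iff]
        intro d hd
        interval_cases d
        · exact hu1_0
        · exact hzero
      have hMdvdpow : M ∣ u 1 ^ k := by
        rw [hMdef]
        refine dvd_trans (pow_dvd_pow X (by omega : k + 1 ≤ 2 * k)) ?_
        rw [pow_mul]
        exact pow_dvd_pow_of_dvd hX2 k
      have hMuk : M ∣ u k := by
        have h2 := K2 k hk le_rfl
        have h3 : u k = u 1 ^ k - (u 1 ^ k - u k) := by ring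
        rw [h3]
        exact dvd_sub hMdvdpow h2
      have hmemδ : Φ k ∈ solutionSpace n k δ := by
        rw [mem_solutionSpace_iff]
        exact ⟨hΦdeg k hk le_rfl, hΦ0 k hk le_rfl, by rw [hΦδ k]; exact hMuk⟩
      rw [← hS] at hmemδ
      have h3 := ((mem_solutionSpace_iff γ (Φ k)).mp hmemδ).2.2
      have h4 : M ∣ (X : Polynomial ℂ) ^ k := by
        have h5 := dvd_sub (show M ∣ MvPolynomial.aeval γ (Φ k) from h3) (hΦγ k hk le_rfl)
        rwa [sub_sub_cancel] at h5
      have h6 := hMcoeff _ h4 k (by omega)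
      rw [coeff_X_pow, if_pos rfl] at h6
      exact one_ne_zero h6
    -- the reparametrisation
    refine ⟨u 1 %ₘ M, hmoddeg _, ?_, ?_, ?_⟩
    · have h00 : (u 1 - u 1 %ₘ M).coeff 0 = 0 := hMcoeff _ (hmodcong (u 1)) 0 (by omega)
      rw [coeff_sub, sub_eq_zero] at h00
      rw [← h00]; exact hu1_0
    · have h11 : (u 1 - u 1 %ₘ M).coeff 1 = 0 := hMcoeff _ (hmodcong (u 1)) 1 (by omega)
      rw [coeff_sub, sub_eq_zero] at h11
      rw [← h11]; exact K3
    · intro ℓ m hm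
      set φ : Polynomial ℂ := u 1 %ₘ M with hφ
      have hφcong : M ∣ u 1 - φ := hmodcong _
      have hmain : M ∣ δ ℓ - (γ ℓ).comp φ := by
        have hexp : (γ ℓ).comp φ
            = ∑ j ∈ Finset.range (k + 1), C ((γ ℓ).coeff j) * φ ^ j := by
          rw [comp_eq_aeval, Polynomial.aeval_eq_sum_range' (Nat.lt_succ_iff.mpr (hγdeg ℓ)) φ]
          exact Finset.sum_congr rfl fun j _ => smul_eq_C_mul _
        have hrestrict : ∑ j ∈ Finset.range (k + 1), C ((γ ℓ).coeff j) * φ ^ j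
            = ∑ j ∈ Finset.Icc 1 k, C ((γ ℓ).coeff j) * φ ^ j := by
          symm
          refine Finset.sum_subset (fun x hx => ?_) (fun x hx hx' => ?_)
          · rw [Finset.mem_Icc] at hx; rw [Finset.mem_range]; omega
          · rw [Finset.mem_range] at hx; rw [Finset.mem_Icc] at hx'
            have hx0 : x = 0 := by omega
            rw [hx0, hγ0 ℓ, map_zero, zero_mul]
        have hsumcong : M ∣ (∑ j ∈ Finset.Icc 1 k, C ((γ ℓ).coeff j) * u j)
            - ∑ j ∈ Finset.Icc 1 k, C ((γ ℓ).coeff j) * φ ^ j := by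
          rw [← Finset.sum_sub_distrib]
          refine Finset.dvd_sum fun j hj => ?_
          have hjm := Finset.mem_Icc.mp hj
          rw [← mul_sub]
          refine Dvd.dvd.mul_left ?_ _
          refine dvd_sub_trans (dvd_sub_symm (K2 j hjm.1 hjm.2)) ?_
          exact dvd_trans hφcong (sub_dvd_pow_sub_pow _ _ j)
        have hK1X := K1 (MvPolynomial.X ℓ)
          (by rw [MvPolynomial.totalDegree_X]; exact hk) (MvPolynomial.coeff_zero_X ℓ)
        rw [MvPolynomial.aeval_X, MvPolynomial.aeval_X] at hK1X
        rw [hexp, hrestrict]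
        exact dvd_sub_trans hK1X hsumcong
      have h2 := hMcoeff _ hmain m (by omega)
      rw [coeff_sub, sub_eq_zero] at h2
      exact h2
  · -- easy direction
    rintro ⟨φ, hφdeg, hφ0, hφ1, hφeq⟩
    have hcong : ∀ i, (X : Polynomial ℂ) ^ (k + 1) ∣ (γ i).comp φ - δ i := by
      intro i
      rw [X_pow_dvd_iff]
      intro d hd
      rw [coeff_sub, sub_eq_zero]
      exact (hφeq i d (by omega)).symm
    ext Ψ
    rw [mem_solutionSpace_iff, mem_solutionSpace_iff]
    refine and_congr_right fun _ => and_congr_right fun _ => ?_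
    have hXφ : (X : Polynomial ℂ) ∣ φ := X_dvd_iff.mpr hφ0
    have hcongΨ := aeval_congr_dvd (γ' := fun i => (γ i).comp φ) (δ' := δ) hcong Ψ
    rw [← aeval_comp_right] at hcongΨ
    constructor
    · intro h
      obtain ⟨r, hr⟩ := h
      have h2 : (X : Polynomial ℂ) ^ (k + 1) ∣ (MvPolynomial.aeval γ Ψ).comp φ := by
        rw [hr, mul_comp, X_pow_comp]
        exact Dvd.dvd.mul_right (pow_dvd_pow_of_dvd hXφ _) _
      have h3 := dvd_sub h2 hcongΨ
      rwa [sub_sub_cancel] at h3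
    · intro h
      have h4 : (X : Polynomial ℂ) ^ (k + 1) ∣ (MvPolynomial.aeval γ Ψ).comp φ := by
        have e : (MvPolynomial.aeval γ Ψ).comp φ
            = MvPolynomial.aeval δ Ψ
              + ((MvPolynomial.aeval γ Ψ).comp φ - MvPolynomial.aeval δ Ψ) := by
          ring
        rw [e]
        exact dvd_add h hcongΨ
      exact dvd_of_dvd_comp hφ0 hφ1 (k + 1) _ h4
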